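/- Let k ≥ 2 be an integer and let A be a k-mixing F-algebra with dim A = d ≥ 2. Then l(A) ≤ 1 + (d − 1)(k − 1); in particular l(A) ≤ d(k − 1). -/

import Mathlib

namespace P
set_option linter.unusedSectionVars false
set_option maxHeartbeats 1000000


/-- The list of leaves (letters) of a nonassociative word, in order. -/
def leafList {α : Type*} : FreeMagma α → List α
  | .of a => [a]
  | .mul x y => leafList x ++ leafList y

/-- The length of a nonassociative word: the number of factors. -/
def wlen {α : Type*} (w : FreeMagma α) : ℕ := (leafList w).length

/-- Evaluation of a formal word with letters in a magma `A`. -/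
def evalA {A : Type*} [Mul A] (w : FreeMagma A) : A :=
  FreeMagma.lift (id : A → A) w

/-- Evaluation of a formal word in variables `Fin n` under an assignment `v`. -/
def evalVar {A : Type*} [Mul A] {n : ℕ} (v : Fin n → A) (w : FreeMagma (Fin n)) : A :=
  FreeMagma.lift v w

/-- `w` is a word in the set `S`: all its letters belong to `S`. -/
def HasLeavesIn {A : Type*} (S : Set A) (w : FreeMagma A) : Prop :=
  ∀ a ∈ leafList w, a ∈ S

/-- `L_i(S)`: the span of all values of words in `S` of length at most `i`.
For `i = 0` this is `0`, since every word has length at least 1. -/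
def Lspan (F : Type*) {A : Type*} [Field F] [NonUnitalNonAssocRing A] [Module F A]
    (S : Set A) (i : ℕ) : Submodule F A :=
  Submodule.span F { a | ∃ w : FreeMagma A, HasLeavesIn S w ∧ wlen w ≤ i ∧ evalA w = a }

/-- `S` is a generating set of the algebra `A`. -/
def Generates (F : Type*) {A : Type*} [Field F] [NonUnitalNonAssocRing A] [Module F A]
    (S : Set A) : Prop :=
  Submodule.span F { a | ∃ w : FreeMagma A, HasLeavesIn S w ∧ evalA w = a } = ⊤

/-- The length `l(S)` of a generating set: the least `k` with `L_k(S) = A`. -/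
noncomputable def lenS (F : Type*) {A : Type*} [Field F] [NonUnitalNonAssocRing A] [Module F A]
    (S : Set A) : ℕ :=
  sInf { k | Lspan F S k = ⊤ }

/-- The characteristic sequence of a generating set `S`, as a predicate on a
nondecreasing sequence `m : Fin d → ℕ`. -/
def IsCharSeq (F : Type*) {A : Type*} [Field F] [NonUnitalNonAssocRing A] [Module F A]
    (S : Set A) {d : ℕ} (m : Fin d → ℕ) : Prop :=
  Monotone m ∧ (∀ j, 1 ≤ m j) ∧
    ∀ t : ℕ, 1 ≤ t →
      (Finset.univ.filter fun j => m j = t).card =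
        Module.finrank F (Lspan F S t) - Module.finrank F (Lspan F S (t - 1))

/-- `w` is a multilinear word using each variable of `T` exactly once. -/
def IsMultilinearOn {n : ℕ} (T : Finset (Fin n)) (w : FreeMagma (Fin n)) : Prop :=
  (leafList w : Multiset (Fin n)) = T.val

/-- Membership in `D_0(z_0,…,z_k)`: multilinear words in `z_0,…,z_k` except those of
length `k+1` in which `z_0` is a factor of the last multiplication. -/
def InD0 {k : ℕ} (w : FreeMagma (Fin (k + 1))) : Prop :=
  (leafList w : Multiset (Fin (k + 1))).Nodup ∧
    ¬∃ u : FreeMagma (Fin (k + 1)),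
        IsMultilinearOn (Finset.univ.erase 0) u ∧
          (w = FreeMagma.of 0 * u ∨ w = u * FreeMagma.of 0)

/-- Membership in `D_l(z_0,…,z_k)`: multilinear words in `z_0,…,z_k` except those of
length `k+1` in which `z_0` occurs in the first factor of the last multiplication. -/
def InDl {k : ℕ} (w : FreeMagma (Fin (k + 1))) : Prop :=
  (leafList w : Multiset (Fin (k + 1))).Nodup ∧
    ¬((leafList w : Multiset (Fin (k + 1))) = (Finset.univ : Finset (Fin (k + 1))).val ∧
      ∃ w1 w2 : FreeMagma (Fin (k + 1)), w = w1 * w2 ∧ (0 : Fin (k + 1)) ∈ leafList w1)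

/-- Membership in `D_r(z_0,…,z_k)`: multilinear words in `z_0,…,z_k` except those of
length `k+1` in which `z_0` occurs in the second factor of the last multiplication. -/
def InDr {k : ℕ} (w : FreeMagma (Fin (k + 1))) : Prop :=
  (leafList w : Multiset (Fin (k + 1))).Nodup ∧
    ¬((leafList w : Multiset (Fin (k + 1))) = (Finset.univ : Finset (Fin (k + 1))).val ∧
      ∃ w1 w2 : FreeMagma (Fin (k + 1)), w = w1 * w2 ∧ (0 : Fin (k + 1)) ∈ leafList w2)

/-- The algebra `A` is `k`-mixing. -/
def IsKMixing (F A : Type*) [Field F] [NonUnitalNonAssocRing A] [Module F A] (k : ℕ) : Prop :=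
  ∀ (x : A) (y : Fin k → A) (w : FreeMagma (Fin (k + 1))),
    (∃ u, IsMultilinearOn (Finset.univ.erase 0) u ∧
        (w = FreeMagma.of 0 * u ∨ w = u * FreeMagma.of 0)) →
      evalVar (Fin.cons x y) w ∈
        Submodule.span F
          { a | ∃ z : FreeMagma (Fin (k + 1)), InD0 z ∧ evalVar (Fin.cons x y) z = a }

/-- The algebra `A` is `k`-sliding. -/
def IsKSliding (F A : Type*) [Field F] [NonUnitalNonAssocRing A] [Module F A] (k : ℕ) : Prop :=
  (∀ (x : A) (y : Fin k → A) (u : FreeMagma (Fin (k + 1))),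
      IsMultilinearOn (Finset.univ.erase 0) u →
        evalVar (Fin.cons x y) (u * FreeMagma.of 0) ∈
          Submodule.span F
            { a | ∃ z : FreeMagma (Fin (k + 1)), InDl z ∧ evalVar (Fin.cons x y) z = a }) ∨
  (∀ (x : A) (y : Fin k → A) (u : FreeMagma (Fin (k + 1))),
      IsMultilinearOn (Finset.univ.erase 0) u →
        evalVar (Fin.cons x y) (FreeMagma.of 0 * u) ∈
          Submodule.span F
            { a | ∃ z : FreeMagma (Fin (k + 1)), InDr z ∧ evalVar (Fin.cons x y) z = a })

/-- `u` is a subword of `w`. -/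
inductive IsSubword {A : Type*} : FreeMagma A → FreeMagma A → Prop
  | refl (w : FreeMagma A) : IsSubword w w
  | left {s u : FreeMagma A} (v : FreeMagma A) : IsSubword s u → IsSubword s (u * v)
  | right (u : FreeMagma A) {s v : FreeMagma A} : IsSubword s v → IsSubword s (u * v)

/-- `IsSprout w L`: `L` is a sprout sequence of the word `w` (with the convention that
words of length 1 have the empty sprout sequence). -/
inductive IsSprout {A : Type*} : FreeMagma A → List (FreeMagma A) → Prop
  | single (a : A) : IsSprout (FreeMagma.of a) []
  | cons_l {u v : FreeMagma A} {L : List (FreeMagma A)} :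
      wlen u ≤ wlen v → IsSprout v L → IsSprout (u * v) (u :: L)
  | cons_r {u v : FreeMagma A} {L : List (FreeMagma A)} :
      wlen v ≤ wlen u → IsSprout u L → IsSprout (u * v) (v :: L)

/-- A word is `k`-bounded if it has length 1 or admits an `l`-sprout sequence all of whose
terms are strictly less than `k`. -/
def KBounded {A : Type*} (k : ℕ) (w : FreeMagma A) : Prop :=
  ∃ L : List (FreeMagma A), IsSprout w L ∧ ∀ u ∈ L, wlen u < k

/-- A word `w` in `S` is irreducible if it does not lie in `L_m(S)` for any `m < l(w)`. -/
def Irred (F : Type*) {A : Type*} [Field F] [NonUnitalNonAssocRing A] [Module F A]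
    (S : Set A) (w : FreeMagma A) : Prop :=
  ∀ m : ℕ, m < wlen w → evalA w ∉ Lspan F S m

/-- The step function of a word: the least `t` such that `w` has a subword of
length `l(w) - 2t - 1`. -/
noncomputable def stepFn {A : Type*} (w : FreeMagma A) : ℕ :=
  sInf { t : ℕ | ∃ u : FreeMagma A, IsSubword u w ∧ wlen u + 2 * t + 1 = wlen w }

/-- `w` is a `p`-step word for the generating set `S`. -/
def IsPStepWord (F : Type*) {A : Type*} [Field F] [NonUnitalNonAssocRing A] [Module F A]
    (S : Set A) (w : FreeMagma A) (p : ℕ) : Prop :=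
  HasLeavesIn S w ∧ Irred F S w ∧ KBounded 3 w ∧ stepFn w = p ∧
    ∀ v : FreeMagma A, HasLeavesIn S v → Irred F S v → KBounded 3 v → wlen v = wlen w →
      p ≤ stepFn v

/-- `A` is `k`-round: `x · v = 0` for every product `v` of `k` elements. -/
def IsKRound (A : Type*) [NonUnitalNonAssocRing A] (k : ℕ) : Prop :=
  ∀ (x : A) (w : FreeMagma A), wlen w = k → x * evalA w = 0

/-- `A` is `k`-based. -/
def IsKBased (A : Type*) [NonUnitalNonAssocRing A] (k : ℕ) : Prop :=
  ∀ (x : A) (u v : FreeMagma A), wlen u + wlen v = k →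
    x * (evalA u * evalA v) = evalA u * (x * evalA v) ∧
      (evalA u * evalA v) * x = (evalA u * x) * evalA v

/-- The set `P(x,y,z)`. -/
def Pset {A : Type*} [Mul A] (x y z : A) : Set A :=
  {(x*z)*y, (z*x)*y, (y*z)*x, (z*y)*x, x*(z*y), x*(y*z), y*(x*z), y*(z*x),
    x*y, y*x, x*z, z*x, y*z, z*y, x, y, z}

/-- The set `Q_l(x,y,z)`. -/
def Qlset {A : Type*} [Mul A] (x y z : A) : Set A :=
  {x*(z*y), x*(y*z), y*(x*z), y*(z*x), x*y, y*x, x*z, z*x, y*z, z*y, x, y, z}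

/-- The set `Q_r(x,y,z)`. -/
def Qrset {A : Type*} [Mul A] (x y z : A) : Set A :=
  {(x*z)*y, (z*x)*y, (y*z)*x, (z*y)*x, x*y, y*x, x*z, z*x, y*z, z*y, x, y, z}

/-- `A` is a mixing algebra. -/
def IsMixingAlg (F A : Type*) [Field F] [NonUnitalNonAssocRing A] [Module F A] : Prop :=
  ∀ x y z : A, (x*y)*z ∈ Submodule.span F (Pset x y z) ∧
    z*(x*y) ∈ Submodule.span F (Pset x y z)

/-- `A` is a sliding algebra. -/
def IsSlidingAlg (F A : Type*) [Field F] [NonUnitalNonAssocRing A] [Module F A] : Prop :=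
  (∀ x y z : A, z*(x*y) ∈ Submodule.span F (Qrset x y z)) ∨
  (∀ x y z : A, (x*y)*z ∈ Submodule.span F (Qlset x y z))


section AuxBasic

variable {α β : Type*}

@[simp] lemma leafList_of (a : α) : leafList (FreeMagma.of a) = [a] := rfl
@[simp] lemma leafList_mul (u v : FreeMagma α) :
    leafList (u * v) = leafList u ++ leafList v := rfl
@[simp] lemma wlen_of (a : α) : wlen (FreeMagma.of a) = 1 := rfl
lemma wlen_mul (u v : FreeMagma α) : wlen (u * v) = wlen u + wlen v := by
  simp [wlen]
lemma wlen_pos (w : FreeMagma α) : 1 ≤ wlen w := by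
  induction w with
  | ih1 a => simp [wlen]
  | ih2 u v ih1 ih2 => rw [wlen_mul]; omega
lemma eq_of_wlen_one {w : FreeMagma α} (h : wlen w = 1) : ∃ a, w = FreeMagma.of a := by
  cases w with
  | of a => exact ⟨a, rfl⟩
  | mul u v =>
    exfalso
    have h1 := wlen_pos u
    have h2 := wlen_pos v
    have : wlen (u * v) = wlen u + wlen v := wlen_mul u v
    simp only [show u.mul v = u * v from rfl] at h
    omega

variable {A : Type*} [Mul A]

@[simp] lemma evalA_of (a : A) : evalA (FreeMagma.of a) = a := rfl
@[simp] lemma evalA_mul (u v : FreeMagma A) : evalA (u * v) = evalA u * evalA v :=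
  map_mul (FreeMagma.lift (id : A → A)) u v

lemma lift_congr [Mul β] (f g : α → β) (w : FreeMagma α)
    (h : ∀ i ∈ leafList w, f i = g i) : FreeMagma.lift f w = FreeMagma.lift g w := by
  induction w with
  | ih1 a => simpa using h a (by simp)
  | ih2 u v ih1 ih2 =>
    rw [map_mul, map_mul, ih1, ih2]
    · intro i hi; exact h i (by simp [hi])
    · intro i hi; exact h i (by simp [hi])

lemma evalA_lift (σ : α → FreeMagma A) (w : FreeMagma α) :
    evalA (FreeMagma.lift σ w) = FreeMagma.lift (fun i => evalA (σ i)) w := by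
  induction w with
  | ih1 a => simp
  | ih2 u v ih1 ih2 => rw [map_mul, map_mul, evalA_mul, ih1, ih2]

lemma leafList_lift {γ : Type*} (σ : α → FreeMagma γ) (w : FreeMagma α) :
    leafList (FreeMagma.lift σ w) = (leafList w).flatMap fun i => leafList (σ i) := by
  induction w with
  | ih1 a => simp
  | ih2 u v ih1 ih2 => rw [map_mul, leafList_mul, ih1, ih2, leafList_mul, List.flatMap_append]

lemma wlen_lift {γ : Type*} (σ : α → FreeMagma γ) (w : FreeMagma α) :
    wlen (FreeMagma.lift σ w) = ((leafList w).map fun i => wlen (σ i)).sum := by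
  rw [wlen, leafList_lift, List.length_flatMap]; rfl

lemma hasLeavesIn_lift {S : Set A} (σ : α → FreeMagma A) (w : FreeMagma α)
    (h : ∀ i ∈ leafList w, HasLeavesIn S (σ i)) : HasLeavesIn S (FreeMagma.lift σ w) := by
  intro a ha
  rw [leafList_lift] at ha
  obtain ⟨i, hi, hai⟩ := List.mem_flatMap.mp ha
  exact h i hi a hai

lemma hasLeavesIn_mul {S : Set A} {u v : FreeMagma A}
    (hu : HasLeavesIn S u) (hv : HasLeavesIn S v) : HasLeavesIn S (u * v) := by
  intro a ha
  rcases List.mem_append.mp ha with h | h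
  exacts [hu a h, hv a h]

lemma list_len_le_sum (f : α → ℕ) (hf : ∀ x, 1 ≤ f x) :
    ∀ l : List α, l.length ≤ (l.map f).sum := by
  intro l
  induction l with
  | nil => simp
  | cons x xs ih =>
    rw [List.length_cons, List.map_cons, List.sum_cons]
    have := hf x
    omega

lemma list_mem_le_sum (f : α → ℕ) : ∀ (l : List α) (i : α), i ∈ l → f i ≤ (l.map f).sum := by
  intro l
  induction l with
  | nil => intro i hi; simp at hi
  | cons x xs ih =>
    intro i hi
    rw [List.map_cons, List.sum_cons]
    rcases List.mem_cons.mp hi with rfl | hi'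
    · omega
    · have := ih i hi'; omega

lemma list_sum_ge (f : α → ℕ) (hf : ∀ x, 1 ≤ f x) (l : List α) (i : α)
    (hi : i ∈ l) (hl : 2 ≤ l.length) : f i + 1 ≤ (l.map f).sum := by
  cases l with
  | nil => simp at hi
  | cons x xs =>
    rw [List.length_cons] at hl
    rw [List.map_cons, List.sum_cons]
    rcases List.mem_cons.mp hi with rfl | hi'
    · have h1 := list_len_le_sum f hf xs
      omega
    · have h2 := list_mem_le_sum f xs i hi'
      have h3 := hf x
      omega

lemma nodup_le_univ {n : ℕ} {m : Multiset (Fin n)} (h : m.Nodup) :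
    m ≤ (Finset.univ : Finset (Fin n)).val := by
  refine Multiset.le_iff_count.mpr fun a => ?_
  have h1 : m.count a ≤ 1 := Multiset.nodup_iff_count_le_one.mp h a
  have h2 : ((Finset.univ : Finset (Fin n)).val).count a = 1 :=
    Multiset.count_eq_one_of_mem Finset.univ.nodup (Finset.mem_val.mpr (Finset.mem_univ a))
  omega

end AuxBasic

section AuxLspan
variable {F A : Type*} [Field F] [NonUnitalNonAssocRing A] [Module F A]
  [SMulCommClass F A A] [IsScalarTower F A A] {S : Set A}

lemma word_mem_Lspan {w : FreeMagma A} (hw : HasLeavesIn S w) {i : ℕ} (hi : wlen w ≤ i) :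
    evalA w ∈ Lspan F S i :=
  Submodule.subset_span ⟨w, hw, hi, rfl⟩

lemma Lspan_mono {i j : ℕ} (hij : i ≤ j) : Lspan F S i ≤ Lspan F S j :=
  Submodule.span_mono fun a ⟨w, hw, hl, he⟩ => ⟨w, hw, hl.trans hij, he⟩

lemma mul_mem_Lspan {a b : A} {i j : ℕ} (ha : a ∈ Lspan F S i) (hb : b ∈ Lspan F S j) :
    a * b ∈ Lspan F S (i + j) := by
  induction ha using Submodule.span_induction with
  | mem x hx =>
    induction hb using Submodule.span_induction with
    | mem y hy =>
      obtain ⟨w, hw, hl, rfl⟩ := hx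
      obtain ⟨w', hw', hl', rfl⟩ := hy
      rw [← evalA_mul]
      exact word_mem_Lspan (hasLeavesIn_mul hw hw') (by rw [wlen_mul]; omega)
    | zero => rw [mul_zero]; exact zero_mem _
    | add y z _ _ h1 h2 => rw [mul_add]; exact add_mem h1 h2
    | smul c y _ h1 => rw [mul_smul_comm]; exact Submodule.smul_mem _ c h1
  | zero => rw [zero_mul]; exact zero_mem _
  | add x y _ _ h1 h2 => rw [add_mul]; exact add_mem h1 h2
  | smul c x _ h1 => rw [smul_mul_assoc]; exact Submodule.smul_mem _ c h1

end AuxLspan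

/-- Cutting lemma: a word of length at least `s.card ≥ 1` can be decomposed into blocks
indexed by `s`. -/
lemma cut {A : Type*} {k : ℕ} :
    ∀ (Q : FreeMagma A) (s : Finset (Fin (k + 1))), s.Nonempty → s.card ≤ wlen Q →
      ∃ (u : FreeMagma (Fin (k + 1))) (σ : Fin (k + 1) → FreeMagma A),
        ((leafList u : Multiset (Fin (k + 1))) = s.val) ∧ FreeMagma.lift σ u = Q ∧
          ∀ i, ∀ a ∈ leafList (σ i), a ∈ leafList Q := by
  intro Q
  induction Q with
  | ih1 b =>
    intro s hs hcard
    obtain ⟨i, rfl⟩ := Finset.card_eq_one.mp (le_antisymm (by simpa [wlen] using hcard) hs.card_pos)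
    exact ⟨FreeMagma.of i, fun _ => FreeMagma.of b, by simp, by simp, fun _ a ha => ha⟩
  | ih2 Q1 Q2 ih1 ih2 =>
    intro s hs hcard
    rcases eq_or_lt_of_le (Nat.succ_le_of_lt hs.card_pos) with h1 | h2
    · obtain ⟨i, rfl⟩ := Finset.card_eq_one.mp h1.symm
      exact ⟨FreeMagma.of i, fun _ => Q1 * Q2, by simp, by simp, fun _ a ha => ha⟩
    · rw [wlen_mul] at hcard
      set c := s.card with hc
      have hq1 := wlen_pos Q1
      have hq2 := wlen_pos Q2
      obtain ⟨c1, hc1pos, hc1le, hcle1, hcle2⟩ :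
          ∃ c1, 1 ≤ c1 ∧ c1 ≤ c - 1 ∧ c1 ≤ wlen Q1 ∧ c - c1 ≤ wlen Q2 :=
        ⟨min (wlen Q1) (c - 1), le_min (by omega) (by omega), min_le_right _ _,
          min_le_left _ _, by rcases min_cases (wlen Q1) (c - 1) with ⟨h, _⟩ | ⟨h, _⟩ <;> omega⟩
      obtain ⟨s1, hs1sub, hs1card⟩ :=
        Finset.exists_subset_card_eq (s := s) (n := c1) (by omega)
      set s2 := s \ s1 with hs2
      have hs2card : s2.card = c - c1 := by rw [hs2, Finset.card_sdiff_of_subset hs1sub, hs1card]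
      obtain ⟨u1, σ1, hu1, hσ1, hl1⟩ := ih1 s1 (Finset.card_pos.mp (by omega)) (by omega)
      obtain ⟨u2, σ2, hu2, hσ2, hl2⟩ := ih2 s2 (Finset.card_pos.mp (by omega)) (by omega)
      classical
      refine ⟨u1 * u2, fun i => if i ∈ s1 then σ1 i else σ2 i, ?_, ?_, ?_⟩
      · have : (leafList (u1 * u2) : Multiset (Fin (k+1))) = s1.val + s2.val := by
          rw [leafList_mul, ← hu1, ← hu2]; rfl
        rw [this, hs2, Finset.sdiff_val, add_tsub_cancel_of_le (Finset.val_le_iff.mpr hs1sub)]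
      · rw [map_mul]
        have e1 : FreeMagma.lift (fun i => if i ∈ s1 then σ1 i else σ2 i) u1 = Q1 := by
          rw [← hσ1]
          apply lift_congr
          intro i hi
          have : i ∈ s1 := by
            have h : (i : Fin (k+1)) ∈ (leafList u1 : Multiset (Fin (k+1))) := by simpa using hi
            rw [hu1] at h; simpa using h
          simp [this]
        have e2 : FreeMagma.lift (fun i => if i ∈ s1 then σ1 i else σ2 i) u2 = Q2 := by
          rw [← hσ2]
          apply lift_congr
          intro i hi
          have hi2 : i ∈ s2 := by
            have h : (i : Fin (k+1)) ∈ (leafList u2 : Multiset (Fin (k+1))) := by simpa using hi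
            rw [hu2] at h; simpa using h
          have : i ∉ s1 := (Finset.mem_sdiff.mp hi2).2
          simp [this]
        rw [e1, e2]
      · intro i a ha
        by_cases hmem : i ∈ s1
        · simp only [hmem, if_pos] at ha
          exact List.mem_append.mpr (Or.inl (hl1 i a ha))
        · simp only [hmem, if_neg, if_false] at ha
          exact List.mem_append.mpr (Or.inr (hl2 i a ha))

section AuxMain
variable {F A : Type*} [Field F] [NonUnitalNonAssocRing A] [Module F A]
  [SMulCommClass F A A] [IsScalarTower F A A] {S : Set A}

lemma D0_span_le {k : ℕ} (hk : 2 ≤ k) (t c n : ℕ) (ht : 1 ≤ t) (hck : t + k ≤ c)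
    (hprev : ∀ q, q ≤ c - 1 → Lspan F S q ≤ Lspan F S t)
    (IH : ∀ n' : ℕ, n' < n → ∀ P Q : FreeMagma A, HasLeavesIn S P → HasLeavesIn S Q →
      wlen P + wlen Q = c → wlen P ≤ t → wlen Q ≤ t →
      t ≤ max (wlen P) (wlen Q) + n' → evalA P * evalA Q ∈ Lspan F S t)
    (B : Fin (k + 1) → FreeMagma A) (hB : ∀ i, HasLeavesIn S (B i))
    (hsum : ∑ i, wlen (B i) = c) (ha : wlen (B 0) ≤ t) (hother : c - wlen (B 0) ≤ t)
    (hn : t ≤ wlen (B 0) + n) :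
    ∀ z : FreeMagma (Fin (k + 1)), InD0 z → evalA (FreeMagma.lift B z) ∈ Lspan F S t := by
  rintro z ⟨hnd, hnotex⟩
  have hf1 : ∀ i, 1 ≤ wlen (B i) := fun i => wlen_pos _
  have hμ : (leafList z : Multiset (Fin (k+1))) ≤ (Finset.univ : Finset (Fin (k+1))).val :=
    nodup_le_univ hnd
  have htotal : c = (((Finset.univ : Finset (Fin (k+1))).val).map fun i => wlen (B i)).sum := by
    rw [← hsum]; rfl
  by_cases hfull : (leafList z : Multiset (Fin (k+1))) = (Finset.univ : Finset (Fin (k+1))).val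
  · -- full multilinear word
    cases z with
    | of i =>
      exfalso
      have hcard := congrArg Multiset.card hfull
      simp only [Multiset.coe_card] at hcard
      rw [show (Finset.univ : Finset (Fin (k+1))).val.card = Finset.univ.card from rfl,
        Finset.card_univ, Fintype.card_fin] at hcard
      simp at hcard
      omega
    | mul z1 z2 =>
      have hz12 : (z1.mul z2) = z1 * z2 := rfl
      have hWmul : FreeMagma.lift B (z1.mul z2) =
          FreeMagma.lift B z1 * FreeMagma.lift B z2 := map_mul _ z1 z2
      set W1 := FreeMagma.lift B z1 with hW1
      set W2 := FreeMagma.lift B z2 with hW2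
      have hlv1 : HasLeavesIn S W1 := hasLeavesIn_lift _ _ fun i _ => hB i
      have hlv2 : HasLeavesIn S W2 := hasLeavesIn_lift _ _ fun i _ => hB i
      have hw1 : wlen W1 = ((leafList z1).map fun i => wlen (B i)).sum := wlen_lift _ _
      have hw2 : wlen W2 = ((leafList z2).map fun i => wlen (B i)).sum := wlen_lift _ _
      have hs12 : wlen W1 + wlen W2 = c := by
        have e2 : wlen (FreeMagma.lift B (z1.mul z2)) = c := by
          rw [wlen_lift]
          calc ((leafList (z1.mul z2)).map fun i => wlen (B i)).sum
              = ((leafList (z1.mul z2) : Multiset (Fin (k+1))).map fun i => wlen (B i)).sum := rfl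
            _ = (((Finset.univ : Finset (Fin (k+1))).val).map fun i => wlen (B i)).sum := by
                rw [hfull]
            _ = c := htotal.symm
        rw [hWmul, wlen_mul] at e2
        exact e2
      have hp1 := wlen_pos W1
      have hp2 := wlen_pos W2
      have h0mem : (0 : Fin (k+1)) ∈ leafList z1 ∨ (0 : Fin (k+1)) ∈ leafList z2 := by
        have h : (0 : Fin (k+1)) ∈ (leafList (z1.mul z2) : Multiset (Fin (k+1))) := by
          rw [hfull]
          exact Finset.mem_val.mpr (Finset.mem_univ _)
        rw [Multiset.mem_coe, hz12, leafList_mul] at h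
        exact List.mem_append.mp h
      -- exclusion: neither factor is `of 0`
      have hex1 : z1 ≠ FreeMagma.of 0 := by
        intro h; subst h
        apply hnotex
        refine ⟨z2, ?_, Or.inl rfl⟩
        show (leafList z2 : Multiset (Fin (k+1))) = (Finset.univ.erase (0 : Fin (k+1))).val
        have h1 : (0 : Fin (k+1)) ::ₘ (leafList z2 : Multiset (Fin (k+1)))
            = (Finset.univ : Finset (Fin (k+1))).val := by
          rw [← hfull]; rfl
        rw [Finset.erase_val, ← h1, Multiset.erase_cons_head]
      have hex2 : z2 ≠ FreeMagma.of 0 := by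
        intro h; subst h
        apply hnotex
        refine ⟨z1, ?_, Or.inr rfl⟩
        show (leafList z1 : Multiset (Fin (k+1))) = (Finset.univ.erase (0 : Fin (k+1))).val
        have h2 : (0 : Fin (k+1)) ::ₘ (leafList z1 : Multiset (Fin (k+1)))
            = (Finset.univ : Finset (Fin (k+1))).val := by
          rw [← hfull]
          show _ = ((leafList z1 ++ [(0 : Fin (k+1))] : List (Fin (k+1))) : Multiset (Fin (k+1)))
          exact (Multiset.coe_eq_coe.mpr (List.perm_append_singleton 0 (leafList z1))).symm
        rw [Finset.erase_val, ← h2, Multiset.erase_cons_head]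
      rcases h0mem with h0 | h0
      · -- 0 in first factor
        have hlen2 : 2 ≤ (leafList z1).length := by
          by_contra hcon
          have h1 := wlen_pos z1
          have : wlen z1 = 1 := by unfold wlen at h1 ⊢; omega
          obtain ⟨j, rfl⟩ := eq_of_wlen_one this
          simp only [leafList_of, List.mem_singleton] at h0
          exact hex1 (by rw [h0])
        have hs1ge : wlen (B 0) + 1 ≤ wlen W1 := by
          rw [hw1]
          exact list_sum_ge _ hf1 _ _ h0 hlen2
        rw [hWmul, evalA_mul]
        by_cases hs1 : wlen W1 ≤ t
        · have hmx := le_max_left (wlen W1) (wlen W2)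
          exact IH (n - 1) (by omega) W1 W2 hlv1 hlv2 hs12 hs1 (by omega) (by omega)
        · have h1 : evalA W1 ∈ Lspan F S t :=
            hprev (wlen W1) (by omega) (word_mem_Lspan hlv1 le_rfl)
          have h2 : evalA W2 ∈ Lspan F S (wlen W2) := word_mem_Lspan hlv2 le_rfl
          exact hprev (t + wlen W2) (by omega) (mul_mem_Lspan h1 h2)
      · -- 0 in second factor
        have hlen2 : 2 ≤ (leafList z2).length := by
          by_contra hcon
          have h1 := wlen_pos z2
          have : wlen z2 = 1 := by unfold wlen at h1 ⊢; omega
          obtain ⟨j, rfl⟩ := eq_of_wlen_one this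
          simp only [leafList_of, List.mem_singleton] at h0
          exact hex2 (by rw [h0])
        have hs2ge : wlen (B 0) + 1 ≤ wlen W2 := by
          rw [hw2]
          exact list_sum_ge _ hf1 _ _ h0 hlen2
        rw [hWmul, evalA_mul]
        by_cases hs2 : wlen W2 ≤ t
        · have hmx := le_max_right (wlen W1) (wlen W2)
          exact IH (n - 1) (by omega) W1 W2 hlv1 hlv2 hs12 (by omega) hs2 (by omega)
        · have h2 : evalA W2 ∈ Lspan F S t :=
            hprev (wlen W2) (by omega) (word_mem_Lspan hlv2 le_rfl)
          have h1 : evalA W1 ∈ Lspan F S (wlen W1) := word_mem_Lspan hlv1 le_rfl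
          exact hprev (wlen W1 + t) (by omega) (mul_mem_Lspan h1 h2)
  · -- not full: the word misses some variable, so it is short
    obtain ⟨r, hr⟩ := Multiset.le_iff_exists_add.mp hμ
    have hrne : r ≠ 0 := by rintro rfl; rw [add_zero] at hr; exact hfull hr.symm
    obtain ⟨i0, hi0⟩ := Multiset.exists_mem_of_ne_zero hrne
    have hleaves : HasLeavesIn S (FreeMagma.lift B z) := hasLeavesIn_lift _ _ fun i _ => hB i
    have hwz : wlen (FreeMagma.lift B z) + 1 ≤ c := by
      have h1 : wlen (FreeMagma.lift B z)
          = ((leafList z : Multiset (Fin (k+1))).map fun i => wlen (B i)).sum := by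
        rw [wlen_lift]; rfl
      have h3 : 1 ≤ (r.map fun i => wlen (B i)).sum :=
        le_trans (hf1 i0)
          (Multiset.single_le_sum (fun x _ => Nat.zero_le x) _ (Multiset.mem_map_of_mem _ hi0))
      rw [h1]
      rw [htotal, hr, Multiset.map_add, Multiset.sum_add]
      omega
    exact hprev (wlen (FreeMagma.lift B z)) (by omega) (word_mem_Lspan hleaves le_rfl)

end AuxMain

section AuxMain2
variable {F A : Type*} [Field F] [NonUnitalNonAssocRing A] [Module F A]
  [SMulCommClass F A A] [IsScalarTower F A A] {S : Set A}

lemma key_word {k : ℕ} (hk : 2 ≤ k) (hmix : IsKMixing F A k)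
    (t c : ℕ) (ht : 1 ≤ t) (hck : t + k ≤ c)
    (hprev : ∀ q, q ≤ c - 1 → Lspan F S q ≤ Lspan F S t) :
    ∀ (n : ℕ) (P Q : FreeMagma A), HasLeavesIn S P → HasLeavesIn S Q →
      wlen P + wlen Q = c → wlen P ≤ t → wlen Q ≤ t →
      t ≤ max (wlen P) (wlen Q) + n → evalA P * evalA Q ∈ Lspan F S t := by
  intro n
  induction n using Nat.strong_induction_on with
  | _ n IHn =>
  intro P Q hP hQ hsum hPt hQt hn
  classical
  have hcardu : (Finset.univ.erase (0 : Fin (k+1))).card = k := by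
    rw [Finset.card_erase_of_mem (Finset.mem_univ _), Finset.card_univ, Fintype.card_fin]
    omega
  rcases le_total (wlen Q) (wlen P) with hle | hle
  · -- P is the bigger side: cut Q into k blocks
    obtain ⟨u, σ, hu, hσ, hσl⟩ := cut Q (Finset.univ.erase 0)
      (Finset.card_pos.mp (by omega)) (by omega)
    set B : Fin (k+1) → FreeMagma A := fun i => if i = 0 then P else σ i with hBdef
    have hB0 : B 0 = P := if_pos rfl
    have hBne : ∀ i : Fin (k+1), i ≠ 0 → B i = σ i := fun i h => if_neg h
    set x := evalA P with hxdef
    set y : Fin k → A := fun j => evalA (σ j.succ) with hydef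
    have hcons : (fun i => evalA (B i)) = Fin.cons x y := by
      funext i
      refine Fin.cases ?_ (fun j => ?_) i
      · rw [Fin.cons_zero, hB0]
      · rw [Fin.cons_succ, hBne j.succ (Fin.succ_ne_zero j)]
    have hevalu : FreeMagma.lift (Fin.cons x y) u = evalA Q := by
      rw [← hσ, evalA_lift]
      refine (lift_congr _ _ _ ?_).symm
      intro i hi
      have hne : i ≠ 0 := by
        have h : i ∈ Finset.univ.erase (0 : Fin (k+1)) := by
          rw [← Finset.mem_val, ← hu]
          exact Multiset.mem_coe.mpr hi
        exact Finset.ne_of_mem_erase h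
      rw [← hBne i hne]
      exact congrFun hcons i
    have hx : evalA P * evalA Q = evalVar (Fin.cons x y) (FreeMagma.of 0 * u) := by
      show evalA P * evalA Q = FreeMagma.lift (Fin.cons x y) (FreeMagma.of 0 * u)
      rw [map_mul, FreeMagma.lift_of, Fin.cons_zero, hevalu]
    have hmem := hmix x y (FreeMagma.of 0 * u) ⟨u, hu, Or.inl rfl⟩
    rw [← hx] at hmem
    refine Submodule.span_le.mpr ?_ hmem
    rintro _ ⟨z, hz, rfl⟩
    have hconv : evalVar (Fin.cons x y) z = evalA (FreeMagma.lift B z) := by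
      rw [evalA_lift, hcons]; rfl
    rw [hconv]
    have hsigma : ∑ i ∈ Finset.univ.erase (0 : Fin (k+1)), wlen (σ i) = wlen Q := by
      rw [← hσ, wlen_lift,
        show ((leafList u).map fun i => wlen (σ i)).sum
          = (Multiset.map (fun i => wlen (σ i)) (leafList u : Multiset (Fin (k+1)))).sum from rfl,
        hu]
      rfl
    have hsumB : ∑ i, wlen (B i) = c := by
      rw [← Finset.sum_erase_add Finset.univ _ (Finset.mem_univ (0 : Fin (k+1))), hB0]
      rw [Finset.sum_congr rfl fun i hi => by rw [hBne i (Finset.ne_of_mem_erase hi)]]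
      rw [hsigma]
      omega
    have hBleaves : ∀ i, HasLeavesIn S (B i) := by
      intro i
      by_cases h : i = 0
      · rw [h, hB0]; exact hP
      · rw [hBne i h]; exact fun a ha => hQ a (hσl i a ha)
    refine D0_span_le hk t c n ht hck hprev IHn B hBleaves hsumB ?_ ?_ ?_ z hz
    · rw [hB0]; exact hPt
    · rw [hB0]; omega
    · rw [hB0]
      have := max_eq_left hle
      omega
  · -- Q is the bigger side: cut P into k blocks
    obtain ⟨u, σ, hu, hσ, hσl⟩ := cut P (Finset.univ.erase 0)
      (Finset.card_pos.mp (by omega)) (by omega)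
    set B : Fin (k+1) → FreeMagma A := fun i => if i = 0 then Q else σ i with hBdef
    have hB0 : B 0 = Q := if_pos rfl
    have hBne : ∀ i : Fin (k+1), i ≠ 0 → B i = σ i := fun i h => if_neg h
    set x := evalA Q with hxdef
    set y : Fin k → A := fun j => evalA (σ j.succ) with hydef
    have hcons : (fun i => evalA (B i)) = Fin.cons x y := by
      funext i
      refine Fin.cases ?_ (fun j => ?_) i
      · rw [Fin.cons_zero, hB0]
      · rw [Fin.cons_succ, hBne j.succ (Fin.succ_ne_zero j)]
    have hevalu : FreeMagma.lift (Fin.cons x y) u = evalA P := by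
      rw [← hσ, evalA_lift]
      refine (lift_congr _ _ _ ?_).symm
      intro i hi
      have hne : i ≠ 0 := by
        have h : i ∈ Finset.univ.erase (0 : Fin (k+1)) := by
          rw [← Finset.mem_val, ← hu]
          exact Multiset.mem_coe.mpr hi
        exact Finset.ne_of_mem_erase h
      rw [← hBne i hne]
      exact congrFun hcons i
    have hx : evalA P * evalA Q = evalVar (Fin.cons x y) (u * FreeMagma.of 0) := by
      show evalA P * evalA Q = FreeMagma.lift (Fin.cons x y) (u * FreeMagma.of 0)
      rw [map_mul, FreeMagma.lift_of, Fin.cons_zero, hevalu]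
    have hmem := hmix x y (u * FreeMagma.of 0) ⟨u, hu, Or.inr rfl⟩
    rw [← hx] at hmem
    refine Submodule.span_le.mpr ?_ hmem
    rintro _ ⟨z, hz, rfl⟩
    have hconv : evalVar (Fin.cons x y) z = evalA (FreeMagma.lift B z) := by
      rw [evalA_lift, hcons]; rfl
    rw [hconv]
    have hsigma : ∑ i ∈ Finset.univ.erase (0 : Fin (k+1)), wlen (σ i) = wlen P := by
      rw [← hσ, wlen_lift,
        show ((leafList u).map fun i => wlen (σ i)).sum
          = (Multiset.map (fun i => wlen (σ i)) (leafList u : Multiset (Fin (k+1)))).sum from rfl,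
        hu]
      rfl
    have hsumB : ∑ i, wlen (B i) = c := by
      rw [← Finset.sum_erase_add Finset.univ _ (Finset.mem_univ (0 : Fin (k+1))), hB0]
      rw [Finset.sum_congr rfl fun i hi => by rw [hBne i (Finset.ne_of_mem_erase hi)]]
      rw [hsigma]
      omega
    have hBleaves : ∀ i, HasLeavesIn S (B i) := by
      intro i
      by_cases h : i = 0
      · rw [h, hB0]; exact hQ
      · rw [hBne i h]; exact fun a ha => hP a (hσl i a ha)
    refine D0_span_le hk t c n ht hck hprev IHn B hBleaves hsumB ?_ ?_ ?_ z hz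
    · rw [hB0]; exact hQt
    · rw [hB0]; omega
    · rw [hB0]
      have := max_eq_right hle
      omega

lemma stabilize {k : ℕ} (hk : 2 ≤ k) (hmix : IsKMixing F A k)
    (t : ℕ) (ht : 1 ≤ t) (hplateau : Lspan F S (t + (k - 1)) ≤ Lspan F S t) :
    ∀ c, Lspan F S c ≤ Lspan F S t := by
  intro c
  induction c using Nat.strong_induction_on with
  | _ c IH =>
  by_cases hc : c ≤ t + (k - 1)
  · exact (Lspan_mono hc).trans hplateau
  · have hck : t + k ≤ c := by omega
    have hprev : ∀ q, q ≤ c - 1 → Lspan F S q ≤ Lspan F S t := fun q hq => IH q (by omega)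
    refine Submodule.span_le.mpr ?_
    rintro _ ⟨w, hw, hlen, rfl⟩
    by_cases hwc : wlen w ≤ c - 1
    · exact hprev _ hwc (word_mem_Lspan hw le_rfl)
    · have hwc' : wlen w = c := by omega
      cases w with
      | of a =>
        exfalso
        have : wlen (FreeMagma.of a) = 1 := rfl
        omega
      | mul P Q =>
        have hPl : HasLeavesIn S P := fun a ha =>
          hw a (List.mem_append.mpr (Or.inl ha))
        have hQl : HasLeavesIn S Q := fun a ha =>
          hw a (List.mem_append.mpr (Or.inr ha))
        have hsum : wlen P + wlen Q = c := by
          rw [← hwc']; exact (wlen_mul P Q).symm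
        have hPp := wlen_pos P
        have hQp := wlen_pos Q
        show evalA (P.mul Q) ∈ Lspan F S t
        rw [show (P.mul Q) = P * Q from rfl, evalA_mul]
        by_cases hPt : wlen P ≤ t
        · by_cases hQt : wlen Q ≤ t
          · exact key_word hk hmix t c ht hck hprev t P Q hPl hQl hsum hPt hQt
              (Nat.le_add_left t _)
          · have h1 : evalA Q ∈ Lspan F S t :=
              hprev _ (by omega) (word_mem_Lspan hQl le_rfl)
            have h2 : evalA P ∈ Lspan F S (wlen P) := word_mem_Lspan hPl le_rfl
            exact hprev _ (by omega) (mul_mem_Lspan h2 h1)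
        · have h1 : evalA P ∈ Lspan F S t :=
            hprev _ (by omega) (word_mem_Lspan hPl le_rfl)
          have h2 : evalA Q ∈ Lspan F S (wlen Q) := word_mem_Lspan hQl le_rfl
          exact hprev _ (by omega) (mul_mem_Lspan h1 h2)

lemma gen_top (hGen : Generates F S) (t : ℕ)
    (hstab : ∀ c, Lspan F S c ≤ Lspan F S t) : Lspan F S t = ⊤ := by
  rw [eq_top_iff, ← hGen]
  refine Submodule.span_le.mpr ?_
  rintro _ ⟨w, hw, rfl⟩
  exact hstab (wlen w) (word_mem_Lspan hw le_rfl)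

end AuxMain2

section AuxFinal
variable {F A : Type*} [Field F] [NonUnitalNonAssocRing A] [Module F A]
  [SMulCommClass F A A] [IsScalarTower F A A]

lemma stmt2_aux [FiniteDimensional F A] (k : ℕ) (hk : 2 ≤ k) (hmix : IsKMixing F A k)
    (d : ℕ) (hd : Module.finrank F A = d) (hd2 : 2 ≤ d)
    (S : Set A) (hGen : Generates F S) :
    lenS F S ≤ 1 + (d - 1) * (k - 1) ∧ lenS F S ≤ d * (k - 1) := by
  have hnt : Nontrivial A := by
    have hpos : 0 < Module.finrank F A := by omega
    exact Module.nontrivial_of_finrank_pos hpos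
  have hbase : Lspan F S 1 ≠ ⊥ := by
    intro hbot
    have hall : ∀ w : FreeMagma A, HasLeavesIn S w → evalA w ∈ Lspan F S 1 := by
      intro w
      induction w with
      | ih1 a => intro hw; exact word_mem_Lspan hw le_rfl
      | ih2 u v ihu ihv =>
        intro hw
        have hu := ihu fun a ha => hw a (List.mem_append.mpr (Or.inl ha))
        rw [hbot, Submodule.mem_bot] at hu
        rw [evalA_mul, hu, zero_mul]
        exact zero_mem _
    have htop : (⊤ : Submodule F A) ≤ Lspan F S 1 := by
      rw [← hGen]
      exact Submodule.span_le.mpr (by rintro _ ⟨w, hw, rfl⟩; exact hall w hw)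
    have hbt : (⊥ : Submodule F A) = ⊤ := le_antisymm bot_le (hbot ▸ htop)
    exact bot_ne_top hbt
  have claim : ∀ i : ℕ, Lspan F S (1 + i * (k - 1)) = ⊤ ∨
      i + 1 ≤ Module.finrank F (Lspan F S (1 + i * (k - 1))) := by
    intro i
    induction i with
    | zero =>
      right
      have h1 : 1 + 0 * (k - 1) = 1 := by omega
      rw [h1]
      have : Module.finrank F (Lspan F S 1) ≠ 0 := fun h0 =>
        hbase (Submodule.finrank_eq_zero.mp h0)
      omega
    | succ i ih =>
      have hmono : Lspan F S (1 + i * (k - 1)) ≤ Lspan F S (1 + (i + 1) * (k - 1)) :=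
        Lspan_mono (Nat.add_le_add_left (Nat.mul_le_mul_right _ (Nat.le_succ i)) 1)
      rcases ih with htop | hrank
      · left; exact top_le_iff.mp (htop ▸ hmono)
      · by_cases hstall :
            Lspan F S ((1 + i * (k - 1)) + (k - 1)) ≤ Lspan F S (1 + i * (k - 1))
        · left
          have hstab := stabilize hk hmix (1 + i * (k - 1)) (by omega) hstall
          have htop := gen_top hGen _ hstab
          exact top_le_iff.mp (htop ▸ hmono)
        · right
          have hlt : Lspan F S (1 + i * (k - 1)) < Lspan F S ((1 + i * (k - 1)) + (k - 1)) :=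
            lt_of_le_of_ne (Lspan_mono (Nat.le_add_right _ _))
              fun he => hstall (le_of_eq he.symm)
          have hfr := Submodule.finrank_lt_finrank_of_lt hlt
          have hidx : (1 + i * (k - 1)) + (k - 1) = 1 + (i + 1) * (k - 1) := by ring
          rw [hidx] at hfr
          omega
  have hN : Lspan F S (1 + (d - 1) * (k - 1)) = ⊤ := by
    rcases claim (d - 1) with htop | hrank
    · exact htop
    · have hle := Submodule.finrank_le (Lspan F S (1 + (d - 1) * (k - 1)))
      rw [hd] at hle
      exact Submodule.eq_top_of_finrank_eq (by rw [hd]; omega)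
  have hlen : lenS F S ≤ 1 + (d - 1) * (k - 1) := Nat.sInf_le hN
  refine ⟨hlen, hlen.trans ?_⟩
  calc 1 + (d - 1) * (k - 1) ≤ (k - 1) + (d - 1) * (k - 1) := by omega
    _ = ((d - 1) + 1) * (k - 1) := by ring
    _ = d * (k - 1) := by rw [show d - 1 + 1 = d from by omega]

end AuxFinal

section Statement
variable {F A : Type*} [Field F] [NonUnitalNonAssocRing A] [Module F A]
  [SMulCommClass F A A] [IsScalarTower F A A]

/- STATEMENT 2 -/
theorem stmt2 [FiniteDimensional F A] (k : ℕ) (hk : 2 ≤ k) (hmix : IsKMixing F A k)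
    (d : ℕ) (hd : Module.finrank F A = d) (hd2 : 2 ≤ d) :
    ∀ S : Set A, S.Finite → Generates F S →
      lenS F S ≤ 1 + (d - 1) * (k - 1) ∧ lenS F S ≤ d * (k - 1) := by
  intro S _ hGen
  exact stmt2_aux k hk hmix d hd hd2 S hGen

end Statement

end P
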